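/- Let f : ℂ → ℂ be infinitely differentiable (ContDiff ℝ ⊤) and suppose f vanishes to infinite order at 0, i.e. iteratedFDeriv ℝ n f 0 = 0 for every n. Then the function F : ℝ × ℝ → ℂ defined by F(s, θ) = f(exp(−iθ)·√s) for s ≥ 0 and F(s, θ) = 0 for s < 0 is infinitely differentiable on ℝ × ℝ. -/

import Mathlib

open Complex

namespace S8
open Set
def Flat (G : ℝ × ℝ → ℂ) : Prop :=
  ContDiff ℝ (⊤ : ℕ∞) G ∧ ∀ (n : ℕ) (θ : ℝ), iteratedFDeriv ℝ n G (0, θ) = 0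

lemma Flat.bound {G : ℝ × ℝ → ℂ} (hG : Flat G) (k N : ℕ) (θ₀ : ℝ) :
    ∃ ε > (0:ℝ), ∃ C : ℝ, 0 ≤ C ∧ ∀ x θ : ℝ, |x| ≤ ε → |θ - θ₀| ≤ ε →
      ‖iteratedFDeriv ℝ k G (x, θ)‖ ≤ C * |x| ^ N := by
  induction N generalizing k with
  | zero =>
    obtain ⟨C, hC⟩ := (isCompact_Icc.prod isCompact_Icc :
        IsCompact ((Set.Icc (-1:ℝ) 1) ×ˢ Set.Icc (θ₀-1) (θ₀+1))).exists_bound_of_continuousOn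
      (f := iteratedFDeriv ℝ k G) ((hG.1.continuous_iteratedFDeriv (mod_cast le_top)).continuousOn)
    refine ⟨1, one_pos, max C 0, le_max_right _ _, fun x θ hx hθ => ?_⟩
    have h1 := abs_le.1 hx
    have h2 := abs_le.1 hθ
    have := hC (x, θ) ⟨⟨h1.1, h1.2⟩, ⟨by linarith [h2.1], by linarith [h2.2]⟩⟩
    calc ‖iteratedFDeriv ℝ k G (x, θ)‖ ≤ C := this
      _ ≤ max C 0 * |x| ^ 0 := by simp
  | succ N ih =>
    obtain ⟨ε, hε, C, hC0, hC⟩ := ih (k+1)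
    refine ⟨ε, hε, C, hC0, fun x θ hx hθ => ?_⟩
    have hdiff : Differentiable ℝ (iteratedFDeriv ℝ k G) :=
      hG.1.differentiable_iteratedFDeriv (by exact_mod_cast lt_top_iff_ne_top.2 (by simp))
    have hseg : ∀ q ∈ segment ℝ ((0:ℝ), θ) (x, θ),
        ‖fderiv ℝ (iteratedFDeriv ℝ k G) q‖ ≤ C * |x| ^ N := by
      intro q hq
      rw [segment_eq_image'] at hq
      obtain ⟨t, ht, rfl⟩ := hq
      have hq1 : ((0:ℝ), θ) + t • ((x, θ) - ((0:ℝ), θ)) = (t * x, θ) := by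
        simp [Prod.ext_iff]
      beta_reduce
      rw [hq1, norm_fderiv_iteratedFDeriv]
      have htx : |t * x| ≤ |x| := by
        rw [abs_mul]
        calc |t| * |x| ≤ 1 * |x| := by
              apply mul_le_mul_of_nonneg_right _ (abs_nonneg x)
              rw [abs_le]; exact ⟨by linarith [ht.1], ht.2⟩
          _ = |x| := one_mul _
      calc ‖iteratedFDeriv ℝ (k+1) G (t * x, θ)‖ ≤ C * |t * x| ^ N :=
            hC (t*x) θ (htx.trans hx) hθ
        _ ≤ C * |x| ^ N := by
            apply mul_le_mul_of_nonneg_left _ hC0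
            exact pow_le_pow_left₀ (abs_nonneg _) htx N
    have := (convex_segment ((0:ℝ), θ) (x, θ)).norm_image_sub_le_of_norm_fderiv_le
      (fun q _ => hdiff q) hseg
      (left_mem_segment ℝ _ _) (right_mem_segment ℝ _ _)
    rw [hG.2 k θ, sub_zero] at this
    calc ‖iteratedFDeriv ℝ k G (x, θ)‖ ≤ C * |x| ^ N * ‖((x:ℝ), θ) - ((0:ℝ), θ)‖ := this
      _ = C * |x| ^ (N+1) := by
          have : ((x:ℝ), θ) - ((0:ℝ), θ) = (x, (0:ℝ)) := by simp [Prod.ext_iff]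
          rw [this, Prod.norm_def]
          simp [Real.norm_eq_abs, pow_succ]
          ring

lemma Flat.const_mul {G : ℝ × ℝ → ℂ} (hG : Flat G) (c : ℂ) : Flat (fun p => c * G p) := by
  refine ⟨hG.1.const_smul c, fun n θ => ?_⟩
  have : (fun p => c * G p) = fun p => c • G p := by funext p; simp
  rw [this, iteratedFDeriv_const_smul_apply' (hG.1.of_le (mod_cast le_top)).contDiffAt, hG.2 n θ, smul_zero]

lemma Flat.sub {G G' : ℝ × ℝ → ℂ} (hG : Flat G) (hG' : Flat G') :
    Flat (fun p => G p - G' p) := by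
  refine ⟨hG.1.sub hG'.1, fun n θ => ?_⟩
  have : (fun p => G p - G' p) = fun p => G p + -(G' p) := by funext p; ring
  rw [this, iteratedFDeriv_add_apply' (hG.1.of_le (mod_cast le_top)).contDiffAt
    ((hG'.1.of_le (mod_cast le_top)).neg).contDiffAt,
    show iteratedFDeriv ℝ n (fun p => -(G' p)) ((0:ℝ),θ) = - iteratedFDeriv ℝ n G' ((0:ℝ),θ) from iteratedFDeriv_neg_apply, hG.2 n θ, hG'.2 n θ]
  simp

lemma Flat.fderiv_apply {G : ℝ × ℝ → ℂ} (hG : Flat G) (v : ℝ × ℝ) :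
    Flat (fun p => fderiv ℝ G p v) := by
  constructor
  · exact (hG.1.fderiv_right (mod_cast le_top)).clm_apply contDiff_const
  · intro n θ
    have h1 : iteratedFDeriv ℝ n (fderiv ℝ G) (0, θ) = 0 := by
      rw [← norm_eq_zero, norm_iteratedFDeriv_fderiv, hG.2 (n+1) θ, norm_zero]
    have h2 : (fun p => fderiv ℝ G p v)
        = (ContinuousLinearMap.apply ℝ ℂ v) ∘ (fderiv ℝ G) := rfl
    rw [h2, ContinuousLinearMap.iteratedFDeriv_comp_left _
      (hG.1.fderiv_right (m := (n : WithTop ℕ∞)) (by exact_mod_cast le_top)).contDiffAt (le_refl (n : WithTop ℕ∞)), h1]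
    ext v
    simp [ContinuousLinearMap.compContinuousMultilinearMap_coe]

lemma Flat.mul_x {G : ℝ × ℝ → ℂ} (hG : Flat G) : Flat (fun p => (p.1 : ℂ) * G p) := by
  have hx : ContDiff ℝ (⊤ : ℕ∞) (fun p : ℝ × ℝ => (p.1 : ℂ)) :=
    Complex.ofRealCLM.contDiff.comp contDiff_fst
  refine ⟨hx.mul hG.1, fun n θ => ?_⟩
  rw [← norm_eq_zero]
  have := norm_iteratedFDeriv_mul_le (𝕜 := ℝ) hx hG.1 ((0:ℝ), θ)
    (n := n) (mod_cast le_top)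
  refine le_antisymm (this.trans (le_of_eq ?_)) (norm_nonneg _)
  apply Finset.sum_eq_zero
  intro i hi
  rw [hG.2 (n - i) θ]
  simp


noncomputable def Hh (G : ℝ × ℝ → ℂ) (m : ℕ) : ℝ × ℝ → ℂ :=
  fun p => if 0 < p.1 then ((p.1 ^ m)⁻¹ : ℝ) • G (Real.sqrt p.1, p.2) else 0

noncomputable def Gs (G : ℝ × ℝ → ℂ) (m : ℕ) : ℝ × ℝ → ℂ :=
  fun p => (2⁻¹ : ℂ) * ((p.1 : ℂ) * fderiv ℝ G p (1, 0)) - (m : ℂ) * G p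

noncomputable def Gt (G : ℝ × ℝ → ℂ) : ℝ × ℝ → ℂ := fun p => fderiv ℝ G p (0, 1)

lemma Flat.gs {G : ℝ × ℝ → ℂ} (hG : Flat G) (m : ℕ) : Flat (Gs G m) :=
  (((hG.fderiv_apply (1,0)).mul_x).const_mul 2⁻¹).sub (hG.const_mul (m:ℂ))

lemma Flat.gt {G : ℝ × ℝ → ℂ} (hG : Flat G) : Flat (Gt G) := hG.fderiv_apply (0,1)

noncomputable def A : (ℝ × ℝ) →L[ℝ] ℂ := Complex.ofRealCLM.comp (ContinuousLinearMap.fst ℝ ℝ ℝ)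
noncomputable def B : (ℝ × ℝ) →L[ℝ] ℂ := Complex.ofRealCLM.comp (ContinuousLinearMap.snd ℝ ℝ ℝ)

set_option maxHeartbeats 1000000 in
lemma hasFDerivAt_Hh {G : ℝ × ℝ → ℂ} (hG : Flat G) (m : ℕ) (p : ℝ × ℝ) :
    HasFDerivAt (Hh G m) (Hh (Gs G m) (m+1) p • A + Hh (Gt G) m p • B) p := by
  rcases lt_trichotomy p.1 0 with hp | hp | hp
  · have hev : Hh G m =ᶠ[nhds p] (fun _ => (0:ℂ)) := by
      filter_upwards [(isOpen_lt continuous_fst continuous_const).mem_nhds hp] with q hq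
      exact if_neg (not_lt.2 (le_of_lt hq))
    have h0 : (Hh (Gs G m) (m+1) p • A + Hh (Gt G) m p • B) = 0 := by
      have h1 : Hh (Gs G m) (m+1) p = 0 := if_neg (not_lt.2 hp.le)
      have h2 : Hh (Gt G) m p = 0 := if_neg (not_lt.2 hp.le)
      rw [h1, h2]; ext v <;> simp [ContinuousLinearMap.comp_apply]
    rw [h0]
    exact (hasFDerivAt_const (0:ℂ) p).congr_of_eventuallyEq hev
  · -- boundary case
    have h1 : Hh (Gs G m) (m+1) p = 0 := if_neg (by rw [hp]; exact lt_irrefl 0)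
    have h2 : Hh (Gt G) m p = 0 := if_neg (by rw [hp]; exact lt_irrefl 0)
    have hz : Hh (Gs G m) (m+1) p • A + Hh (Gt G) m p • B = 0 := by
      rw [h1, h2]; ext v <;> simp [ContinuousLinearMap.comp_apply]
    rw [hz]
    have hp0 : Hh G m p = 0 := if_neg (by rw [hp]; exact lt_irrefl 0)
    rw [hasFDerivAt_iff_isLittleO_nhds_zero]
    simp only [hp0, sub_zero, ContinuousLinearMap.zero_apply]
    obtain ⟨ε, hε, C, hC0, hC⟩ := hG.bound 0 (2*m+3) p.2
    rw [Asymptotics.isLittleO_iff]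
    intro c hc
    have hδ : (0:ℝ) < min (ε^2) (min ε ((c/(C+1))^2)) := by positivity
    set δ := min (ε^2) (min ε ((c/(C+1))^2)) with hδdef
    filter_upwards [Metric.ball_mem_nhds (0 : ℝ × ℝ) hδ] with h hq
    rw [Metric.mem_ball, dist_zero_right, Prod.norm_def, max_lt_iff,
      Real.norm_eq_abs, Real.norm_eq_abs] at hq
    obtain ⟨hq1, hq2⟩ := hq
    set q : ℝ × ℝ := p + h with hqdef
    have hq1' : q.1 = h.1 := by rw [hqdef, Prod.fst_add, hp, zero_add]
    have hq2' : q.2 - p.2 = h.2 := by rw [hqdef, Prod.snd_add]; ring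
    have hq1a : |q.1| < δ := by rw [hq1']; exact hq1
    have hq2a : |q.2 - p.2| < δ := by rw [hq2']; exact hq2
    by_cases h1 : 0 < q.1
    · have hx0 : (0:ℝ) ≤ Real.sqrt q.1 := Real.sqrt_nonneg _
      have hq1d : q.1 ≤ δ := (le_abs_self _).trans hq1a.le
      have hxe : Real.sqrt q.1 ≤ ε := by
        calc Real.sqrt q.1 ≤ Real.sqrt (ε^2) :=
              Real.sqrt_le_sqrt (hq1d.trans (min_le_left _ _))
          _ = ε := Real.sqrt_sq hε.le
      have hxc : Real.sqrt q.1 ≤ c/(C+1) := by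
        calc Real.sqrt q.1 ≤ Real.sqrt ((c/(C+1))^2) :=
              Real.sqrt_le_sqrt (hq1d.trans ((min_le_right _ _).trans (min_le_right _ _)))
          _ = c/(C+1) := Real.sqrt_sq (by positivity)
      have hGb := hC (Real.sqrt q.1) q.2 (by
          rw [_root_.abs_of_nonneg hx0]; exact hxe)
        (hq2a.le.trans ((min_le_right _ _).trans (min_le_left _ _)))
      rw [norm_iteratedFDeriv_zero] at hGb
      have key : ‖Hh G m q‖ ≤ (C * Real.sqrt q.1) * q.1 := by
        have hif : Hh G m q = ((q.1 ^ m)⁻¹ : ℝ) • G (Real.sqrt q.1, q.2) := if_pos h1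
        rw [hif, norm_smul, Real.norm_eq_abs,
          _root_.abs_of_nonneg (by positivity : (0:ℝ) ≤ (q.1^m)⁻¹)]
        have h2m : |Real.sqrt q.1| ^ (2*m+3) = q.1^(m+1) * Real.sqrt q.1 := by
          rw [_root_.abs_of_nonneg hx0, show 2*m+3 = 2*(m+1)+1 by ring, pow_succ, pow_mul,
            Real.sq_sqrt h1.le]
        calc (q.1^m)⁻¹ * ‖G (Real.sqrt q.1, q.2)‖
            ≤ (q.1^m)⁻¹ * (C * |Real.sqrt q.1|^(2*m+3)) :=
              mul_le_mul_of_nonneg_left hGb (by positivity)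
          _ = (C * Real.sqrt q.1) * q.1 := by
              rw [h2m, pow_succ]
              have : q.1 ^ m ≠ 0 := pow_ne_zero _ (ne_of_gt h1)
              field_simp
      have hq1n : q.1 ≤ ‖h‖ := by
        rw [hq1']
        calc h.1 ≤ |h.1| := le_abs_self _
          _ = ‖h.1‖ := (Real.norm_eq_abs _).symm
          _ ≤ ‖h‖ := norm_fst_le h
      have hCx : C * Real.sqrt q.1 ≤ c := by
        calc C * Real.sqrt q.1 ≤ C * (c/(C+1)) := mul_le_mul_of_nonneg_left hxc hC0
          _ ≤ c := by
            rw [mul_div_assoc', div_le_iff₀ (by positivity : (0:ℝ) < C + 1)]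
            nlinarith
      calc ‖Hh G m (p + h)‖ ≤ (C * Real.sqrt q.1) * q.1 := key
        _ ≤ c * ‖h‖ := mul_le_mul hCx hq1n h1.le hc.le
    · have hz : Hh G m q = 0 := if_neg h1
      rw [hz, norm_zero]
      positivity
  · -- positive case
    have hx : (0:ℝ) < Real.sqrt p.1 := Real.sqrt_pos.2 hp
    have hGdiff : Differentiable ℝ G := hG.1.differentiable (by simp)
    have hsq : HasFDerivAt (fun q : ℝ × ℝ => Real.sqrt q.1)
        ((1 / (2 * Real.sqrt p.1)) • ContinuousLinearMap.fst ℝ ℝ ℝ) p :=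
      (Real.hasDerivAt_sqrt (ne_of_gt hp)).comp_hasFDerivAt p hasFDerivAt_fst
    have hφ : HasFDerivAt (fun q : ℝ × ℝ => (Real.sqrt q.1, q.2))
        (((1 / (2 * Real.sqrt p.1)) • ContinuousLinearMap.fst ℝ ℝ ℝ).prod
          (ContinuousLinearMap.snd ℝ ℝ ℝ)) p := hsq.prodMk hasFDerivAt_snd
    have hcomp := (hGdiff (Real.sqrt p.1, p.2)).hasFDerivAt.comp p hφ
    have hcm : HasFDerivAt (fun q : ℝ × ℝ => ((q.1 ^ m)⁻¹ : ℝ))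
        ((-(m * p.1 ^ (m-1)) / (p.1 ^ m) ^ 2) • ContinuousLinearMap.fst ℝ ℝ ℝ) p :=
      ((hasDerivAt_pow m p.1).inv (pow_ne_zero _ (ne_of_gt hp))).comp_hasFDerivAt p
        hasFDerivAt_fst
    have hprod := hcm.smul hcomp
    have heq : Hh G m =ᶠ[nhds p] fun q => ((q.1 ^ m)⁻¹ : ℝ) • G (Real.sqrt q.1, q.2) := by
      filter_upwards [(isOpen_lt continuous_const continuous_fst).mem_nhds hp] with q hq
      exact if_pos hq
    have hmain := hprod.congr_of_eventuallyEq heq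
    refine hmain.congr_fderiv (Eq.symm ?_)
    refine ContinuousLinearMap.ext fun v => ?_
    have hDG : ∀ a b : ℝ, fderiv ℝ G (Real.sqrt p.1, p.2) (a, b)
        = a • fderiv ℝ G (Real.sqrt p.1, p.2) (1, 0)
          + b • fderiv ℝ G (Real.sqrt p.1, p.2) (0, 1) := by
      intro a b
      have hab : ((a:ℝ), (b:ℝ)) = a • ((1:ℝ), (0:ℝ)) + b • ((0:ℝ), (1:ℝ)) := by simp
      rw [hab, map_add, map_smul, map_smul]
    have hifs : Hh (Gs G m) (m+1) p = ((p.1 ^ (m+1))⁻¹ : ℝ) • Gs G m (Real.sqrt p.1, p.2) :=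
      if_pos hp
    have hift : Hh (Gt G) m p = ((p.1 ^ m)⁻¹ : ℝ) • Gt G (Real.sqrt p.1, p.2) := if_pos hp
    simp only [ContinuousLinearMap.add_apply, ContinuousLinearMap.smul_apply,
      ContinuousLinearMap.comp_apply, A, B, ContinuousLinearMap.coe_fst',
      ContinuousLinearMap.coe_snd', Complex.ofRealCLM_apply,
      ContinuousLinearMap.smulRight_apply, ContinuousLinearMap.prod_apply,
      hifs, hift, Gs, Gt, smul_eq_mul]
    rw [hDG (1 / (2 * Real.sqrt p.1) * v.1) v.2]
    simp only [Function.comp_apply]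
    set x := Real.sqrt p.1 with hxdef
    set a := fderiv ℝ G (x, p.2) (1, 0) with hadef
    set b := fderiv ℝ G (x, p.2) (0, 1) with hbdef
    set g := G (x, p.2) with hgdef
    have hx2 : x ^ 2 = p.1 := Real.sq_sqrt hp.le
    have hxne : (x:ℂ) ≠ 0 := by exact_mod_cast hx.ne'
    rw [← hx2]
    simp only [Complex.real_smul]
    push_cast
    rcases Nat.eq_zero_or_pos m with hm | hm
    · subst hm
      simp only [pow_zero, pow_one, Nat.cast_zero]
      field_simp
      ring
    · obtain ⟨k, rfl⟩ := Nat.exists_eq_succ_of_ne_zero hm.ne'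
      simp only [Nat.succ_sub_one]
      field_simp
      simp only [Nat.succ_eq_add_one]
      push_cast
      ring

lemma contDiff_Hh (n : ℕ) : ∀ {G : ℝ × ℝ → ℂ}, Flat G → ∀ m : ℕ,
    ContDiff ℝ (n : WithTop ℕ∞) (Hh G m) := by
  induction n with
  | zero =>
    intro G hG m
    rw [show ((0:ℕ) : WithTop ℕ∞) = 0 from rfl, contDiff_zero]
    exact continuous_iff_continuousAt.2
      fun p => (hasFDerivAt_Hh hG m p).differentiableAt.continuousAt
  | succ n ih =>
    intro G hG m
    rw [show ((n+1:ℕ) : WithTop ℕ∞) = (n : WithTop ℕ∞) + 1 by push_cast; rfl,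
      contDiff_succ_iff_fderiv_apply]
    refine ⟨fun p => (hasFDerivAt_Hh hG m p).differentiableAt, ?_, fun y => ?_⟩
    · intro hω
      exact absurd hω (by simp)
    · have hfd : fderiv ℝ (Hh G m) = fun p => Hh (Gs G m) (m+1) p • A + Hh (Gt G) m p • B :=
        funext fun p => (hasFDerivAt_Hh hG m p).fderiv
      rw [hfd]
      simp only [ContinuousLinearMap.add_apply, ContinuousLinearMap.smul_apply, smul_eq_mul]
      exact ((ih (hG.gs m) (m+1)).mul contDiff_const).add ((ih hG.gt m).mul contDiff_const)

end S8


/-- If `f : ℂ → ℂ` is smooth and vanishes to infinite order at `0`, then the pullback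
`σ* f`, where `σ(s,θ) = e^{-iθ}√s`, extended by `0` to `s < 0`, is smooth on `ℝ × ℝ`. -/
theorem statement8 (f : ℂ → ℂ) (hf : ContDiff ℝ (⊤ : ℕ∞) f)
    (hflat : ∀ n : ℕ, iteratedFDeriv ℝ n f 0 = 0) :
    ContDiff ℝ (⊤ : ℕ∞) (fun p : ℝ × ℝ =>
      if 0 ≤ p.1 then f (Complex.exp (-Complex.I * p.2) * Real.sqrt p.1) else 0) := by
  have hf0 : f 0 = 0 := by
    have h0 := hflat 0
    rw [← norm_eq_zero, ← norm_iteratedFDeriv_zero (𝕜 := ℝ), h0, norm_zero]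
  set u : ℝ × ℝ → ℂ := fun p => Complex.exp (-Complex.I * p.2) * (p.1 : ℂ) with hu
  have hu_smooth : ContDiff ℝ (⊤ : ℕ∞) u :=
    ((contDiff_const.mul (Complex.ofRealCLM.contDiff.comp contDiff_snd)).cexp).mul
      (Complex.ofRealCLM.contDiff.comp contDiff_fst)
  have hG : S8.Flat (f ∘ u) := by
    refine ⟨hf.comp hu_smooth, fun n θ => ?_⟩
    have hu0 : u (0, θ) = 0 := by simp [hu]
    set S : ℝ := ∑ i ∈ Finset.range (n+1), ‖iteratedFDeriv ℝ i u (0,θ)‖ with hS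
    have hS0 : 0 ≤ S := Finset.sum_nonneg fun _ _ => norm_nonneg _
    have h := norm_iteratedFDeriv_comp_le (𝕜 := ℝ) (n := n) hf hu_smooth
      (mod_cast le_top) ((0:ℝ),θ) (C := 0) (D := 1 + S) ?_ ?_
    · rw [← norm_eq_zero]
      refine le_antisymm ?_ (norm_nonneg _)
      simpa using h
    · intro i _
      rw [hu0, hflat i, norm_zero]
    · intro i hi1 hin
      have hmem : ‖iteratedFDeriv ℝ i u ((0:ℝ),θ)‖ ≤ S :=
        Finset.single_le_sum (f := fun j => ‖iteratedFDeriv ℝ j u ((0:ℝ),θ)‖)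
          (fun _ _ => norm_nonneg _) (Finset.mem_range.2 (Nat.lt_succ_of_le hin))
      calc ‖iteratedFDeriv ℝ i u ((0:ℝ),θ)‖ ≤ 1 + S := by linarith
        _ ≤ (1 + S) ^ i := le_self_pow₀ (by linarith) (by omega)
  have heq : (fun p : ℝ × ℝ =>
      if 0 ≤ p.1 then f (Complex.exp (-Complex.I * p.2) * Real.sqrt p.1) else 0)
      = S8.Hh (f ∘ u) 0 := by
    funext p
    simp only [S8.Hh, pow_zero, inv_one, one_smul, Function.comp_apply, hu]
    rcases lt_trichotomy p.1 0 with h | h | h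
    · rw [if_neg (not_le.2 h), if_neg (not_lt.2 h.le)]
    · rw [if_pos h.ge, if_neg (by rw [h]; exact lt_irrefl 0), h]
      simp [hf0]
    · rw [if_pos h.le, if_pos h]
  rw [heq]
  rw [contDiff_infty]
  exact fun n => S8.contDiff_Hh n hG 0
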